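/- With the notation of the context, both sets Imm_ℤ := ℤ^k \ ⋃_{J ⊆ {1,…,k}} ℳ_ℤ(R(J)) and Imm_ℝ := {a ∈ ℤ^k : a ∉ ⋃_{J ⊆ {1,…,k}} ℳ_ℝ(R(J))} are closed under the c-hull operation: if a belongs to the set and a_i = 0 for all i > j (for some 0 ≤ j ≤ k−1), then a − v_{j+1} also belongs to the set. -/

import Mathlib

open scoped BigOperators

set_option linter.unusedVariables false

/-- The class map `π : ℝ^{ℓ₁+…+ℓ_k} → ℝ^k` of a splitting fan. -/
noncomputable def splitPiR (k : ℕ) (ℓ : Fin k → ℕ)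
    (c : ∀ i j : Fin k, Fin (ℓ j) → ℤ)
    (x : (Σ j : Fin k, Fin (ℓ j)) → ℝ) : Fin k → ℝ :=
  fun i => (∑ ν : Fin (ℓ i), x ⟨i, ν⟩) +
    ∑ j : Fin k, if i < j then ∑ ν : Fin (ℓ j), (c i j ν : ℝ) * x ⟨j, ν⟩ else 0

/-- The integral class map `π : ℤ^{ℓ₁+…+ℓ_k} → ℤ^k` of a splitting fan. -/
def splitPiZ (k : ℕ) (ℓ : Fin k → ℕ)
    (c : ∀ i j : Fin k, Fin (ℓ j) → ℤ)
    (x : (Σ j : Fin k, Fin (ℓ j)) → ℤ) : Fin k → ℤ :=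
  fun i => (∑ ν : Fin (ℓ i), x ⟨i, ν⟩) +
    ∑ j : Fin k, if i < j then ∑ ν : Fin (ℓ j), c i j ν * x ⟨j, ν⟩ else 0

/-- The real maculate region `ℳ_ℝ(R(J))`. -/
noncomputable def splitMacR (k : ℕ) (ℓ : Fin k → ℕ)
    (c : ∀ i j : Fin k, Fin (ℓ j) → ℤ) (J : Set (Fin k)) : Set (Fin k → ℝ) :=
  splitPiR k ℓ c ''
    {x | (∀ ρ : Σ j : Fin k, Fin (ℓ j), ρ.1 ∈ J → x ρ ≤ -1) ∧
         (∀ ρ : Σ j : Fin k, Fin (ℓ j), ρ.1 ∉ J → 0 ≤ x ρ)}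

/-- The integral maculate set `ℳ_ℤ(R(J))`. -/
def splitMacZ (k : ℕ) (ℓ : Fin k → ℕ)
    (c : ∀ i j : Fin k, Fin (ℓ j) → ℤ) (J : Set (Fin k)) : Set (Fin k → ℤ) :=
  splitPiZ k ℓ c ''
    {x | (∀ ρ : Σ j : Fin k, Fin (ℓ j), ρ.1 ∈ J → x ρ ≤ -1) ∧
         (∀ ρ : Σ j : Fin k, Fin (ℓ j), ρ.1 ∉ J → 0 ≤ x ρ)}

/-- The immaculate locus `Imm_ℤ ⊆ ℤ^k`. -/
def immZ (k : ℕ) (ℓ : Fin k → ℕ)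
    (c : ∀ i j : Fin k, Fin (ℓ j) → ℤ) : Set (Fin k → ℤ) :=
  {a | ∀ J : Set (Fin k), a ∉ splitMacZ k ℓ c J}

/-- The really immaculate locus `Imm_ℝ ⊆ ℤ^k`. -/
def immR (k : ℕ) (ℓ : Fin k → ℕ)
    (c : ∀ i j : Fin k, Fin (ℓ j) → ℤ) : Set (Fin k → ℤ) :=
  {a | ∀ J : Set (Fin k), (fun i => (a i : ℝ)) ∉ splitMacR k ℓ c J}

/-- The shift vector `v_j = (ĉ_{1j}, …, ĉ_{j-1,j}, ℓ_j, 0, …, 0) ∈ ℤ^k`. -/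
def vvec (k : ℕ) (ℓ : Fin k → ℕ)
    (c : ∀ i j : Fin k, Fin (ℓ j) → ℤ) (j : Fin k) : Fin k → ℤ :=
  fun i => if i = j then (ℓ j : ℤ) else if i < j then ∑ ν : Fin (ℓ j), c i j ν else 0

/-- `S` is closed under the `c`-hull operation: if `a ∈ S` vanishes on all coordinates
`≥ j` (with `j` 0-based, corresponding to the shift `v_{j+1}` in 1-based notation),
then `a - v_j ∈ S`. -/
def ClosedUnderCHull (k : ℕ) (ℓ : Fin k → ℕ)
    (c : ∀ i j : Fin k, Fin (ℓ j) → ℤ) (S : Set (Fin k → ℤ)) : Prop :=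
  ∀ a ∈ S, ∀ j : Fin k, (∀ i : Fin k, j ≤ i → a i = 0) → (a - vvec k ℓ c j) ∈ S

/-- Both the immaculate locus `Imm_ℤ` and the really immaculate locus `Imm_ℝ` of a
splitting-fan toric variety are closed under the `c`-hull operation. -/
lemma key {R : Type*} [CommRing R] [LinearOrder R] [IsStrictOrderedRing R] {k : ℕ} {ℓ : Fin k → ℕ}
    (hℓ : ∀ j, 1 ≤ ℓ j)
    (cR : ∀ i j : Fin k, Fin (ℓ j) → R)
    (a : Fin k → R) (j : Fin k)
    (ha : ∀ i, j ≤ i → a i = 0)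
    (J : Set (Fin k)) (x : (Σ j : Fin k, Fin (ℓ j)) → R)
    (hx1 : ∀ ρ : Σ j : Fin k, Fin (ℓ j), ρ.1 ∈ J → x ρ ≤ -1)
    (hx2 : ∀ ρ : Σ j : Fin k, Fin (ℓ j), ρ.1 ∉ J → 0 ≤ x ρ)
    (hπ : ∀ i, (∑ ν : Fin (ℓ i), x ⟨i, ν⟩) +
      ∑ j' : Fin k, (if i < j' then ∑ ν : Fin (ℓ j'), cR i j' ν * x ⟨j', ν⟩ else 0)
      = a i - (if i = j then (ℓ j : R) else if i < j then ∑ ν : Fin (ℓ j), cR i j ν else 0)) :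
    ∃ (J' : Set (Fin k)) (x' : (Σ j : Fin k, Fin (ℓ j)) → R),
      (∀ ρ : Σ j : Fin k, Fin (ℓ j), ρ.1 ∈ J' → x' ρ ≤ -1) ∧
      (∀ ρ : Σ j : Fin k, Fin (ℓ j), ρ.1 ∉ J' → 0 ≤ x' ρ) ∧
      ∀ i, (∑ ν : Fin (ℓ i), x' ⟨i, ν⟩) +
        ∑ j' : Fin k, (if i < j' then ∑ ν : Fin (ℓ j'), cR i j' ν * x' ⟨j', ν⟩ else 0) = a i := by
  -- Step 1: x vanishes on all blocks strictly above j
  have hzaux : ∀ m : ℕ, ∀ i : Fin k, k - i.val ≤ m → j < i → ∀ ν, x ⟨i, ν⟩ = 0 := by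
    intro m
    induction m with
    | zero =>
      intro i hi
      have : i.val < k := i.isLt
      omega
    | succ m ih =>
      intro i hi hji
      have hs2 : (∑ j' : Fin k, if i < j' then ∑ ν : Fin (ℓ j'), cR i j' ν * x ⟨j', ν⟩ else 0) = 0 := by
        apply Finset.sum_eq_zero
        intro j' _
        split_ifs with h
        · apply Finset.sum_eq_zero
          intro ν _
          have hv : i.val < j'.val := h
          rw [ih j' (by omega) (lt_trans hji h) ν, mul_zero]
        · rfl
      have hai : a i = 0 := ha i hji.le
      have hne : i ≠ j := (ne_of_gt hji)
      have hnlt : ¬ i < j := not_lt_of_gt hji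
      have hsum : (∑ ν : Fin (ℓ i), x ⟨i, ν⟩) = 0 := by
        have := hπ i
        rw [hs2, hai, if_neg hne, if_neg hnlt] at this
        linarith
      by_cases hiJ : i ∈ J
      · exfalso
        have hle : (∑ ν : Fin (ℓ i), x ⟨i, ν⟩) ≤ ∑ _ν : Fin (ℓ i), (-1 : R) :=
          Finset.sum_le_sum (fun ν _ => hx1 ⟨i, ν⟩ hiJ)
        have hconst : (∑ _ν : Fin (ℓ i), (-1 : R)) = -(ℓ i : R) := by simp
        have h1 : (1 : R) ≤ (ℓ i : R) := by exact_mod_cast hℓ i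
        rw [hsum, hconst] at hle
        linarith
      · intro ν
        have := (Finset.sum_eq_zero_iff_of_nonneg
          (fun ν _ => hx2 ⟨i, ν⟩ hiJ)).mp hsum ν (Finset.mem_univ ν)
        exact this
  have hz : ∀ i : Fin k, j < i → ∀ ν, x ⟨i, ν⟩ = 0 :=
    fun i => hzaux k i (Nat.sub_le _ _)
  -- Step 2: block-j sum is -ℓ_j
  have hs2j : (∑ j' : Fin k, if j < j' then ∑ ν : Fin (ℓ j'), cR j j' ν * x ⟨j', ν⟩ else 0) = 0 := by
    apply Finset.sum_eq_zero
    intro j' _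
    split_ifs with h
    · apply Finset.sum_eq_zero
      intro ν _
      rw [hz j' h ν, mul_zero]
    · rfl
  have hsumj : (∑ ν : Fin (ℓ j), x ⟨j, ν⟩) = -(ℓ j : R) := by
    have := hπ j
    rw [hs2j, ha j le_rfl, if_pos rfl] at this
    linarith
  -- Step 3: entries on block j are ≥ -1
  have hge : ∀ ν : Fin (ℓ j), -1 ≤ x ⟨j, ν⟩ := by
    by_cases hjJ : j ∈ J
    · have h0 : (∑ ν : Fin (ℓ j), (x ⟨j, ν⟩ + 1)) = 0 := by
        rw [Finset.sum_add_distrib, hsumj]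
        simp
      have hnp : ∀ ν ∈ Finset.univ, x ⟨j, (ν : Fin (ℓ j))⟩ + 1 ≤ 0 := by
        intro ν _
        have := hx1 ⟨j, ν⟩ hjJ
        linarith
      intro ν
      have h0' : (∑ ν : Fin (ℓ j), -(x ⟨j, ν⟩ + 1)) = 0 := by
        rw [Finset.sum_neg_distrib, h0, neg_zero]
      have := (Finset.sum_eq_zero_iff_of_nonneg
        (fun ν _ => by linarith [hnp ν (Finset.mem_univ ν)])).mp h0' ν (Finset.mem_univ ν)
      linarith
    · intro ν
      have := hx2 ⟨j, ν⟩ hjJ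
      linarith
  -- Step 4: the new point
  refine ⟨J \ {j}, fun ρ => if ρ.1 = j then x ρ + 1 else x ρ, ?_, ?_, ?_⟩
  · intro ρ hρ
    rw [Set.mem_diff, Set.mem_singleton_iff] at hρ
    beta_reduce
    rw [if_neg hρ.2]
    exact hx1 ρ hρ.1
  · intro ρ hρ
    rw [Set.mem_diff, Set.mem_singleton_iff] at hρ
    push_neg at hρ
    obtain ⟨i0, ν0⟩ := ρ
    beta_reduce
    by_cases h : i0 = j
    · subst h
      split_ifs with hh
      · linarith [hge ν0]
      · exact absurd rfl hh
    · split_ifs with hh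
      · exact absurd hh h
      · exact hx2 ⟨i0, ν0⟩ (fun hmem => h (hρ hmem))
  · intro i
    beta_reduce
    have hS1 : (∑ ν : Fin (ℓ i), (if (⟨i, ν⟩ : Σ j : Fin k, Fin (ℓ j)).1 = j then x ⟨i, ν⟩ + 1 else x ⟨i, ν⟩))
        = (∑ ν : Fin (ℓ i), x ⟨i, ν⟩) + (if i = j then (ℓ j : R) else 0) := by
      by_cases h : i = j
      · subst h
        rw [if_pos rfl]
        have hterm : ∀ ν ∈ (Finset.univ : Finset (Fin (ℓ i))),
            (if (⟨i, ν⟩ : Σ j : Fin k, Fin (ℓ j)).1 = i then x ⟨i, ν⟩ + 1 else x ⟨i, ν⟩)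
            = x ⟨i, ν⟩ + 1 := fun ν _ => if_pos rfl
        rw [Finset.sum_congr rfl hterm, Finset.sum_add_distrib]
        simp
      · rw [if_neg h]
        have hterm : ∀ ν ∈ (Finset.univ : Finset (Fin (ℓ i))),
            (if (⟨i, ν⟩ : Σ j : Fin k, Fin (ℓ j)).1 = j then x ⟨i, ν⟩ + 1 else x ⟨i, ν⟩)
            = x ⟨i, ν⟩ := fun ν _ => if_neg h
        rw [Finset.sum_congr rfl hterm, add_zero]
    have hS2 : (∑ j' : Fin k, (if i < j' then
          ∑ ν : Fin (ℓ j'), cR i j' ν * (if (⟨j', ν⟩ : Σ j : Fin k, Fin (ℓ j)).1 = j then x ⟨j', ν⟩ + 1 else x ⟨j', ν⟩) else 0))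
        = (∑ j' : Fin k, (if i < j' then ∑ ν : Fin (ℓ j'), cR i j' ν * x ⟨j', ν⟩ else 0))
          + (if i < j then ∑ ν : Fin (ℓ j), cR i j ν else 0) := by
      have hterm : ∀ j' ∈ (Finset.univ : Finset (Fin k)),
          (if i < j' then
            ∑ ν : Fin (ℓ j'), cR i j' ν * (if (⟨j', ν⟩ : Σ j : Fin k, Fin (ℓ j)).1 = j then x ⟨j', ν⟩ + 1 else x ⟨j', ν⟩) else 0)
          = (if i < j' then ∑ ν : Fin (ℓ j'), cR i j' ν * x ⟨j', ν⟩ else 0)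
            + (if j' = j then (if i < j then ∑ ν : Fin (ℓ j), cR i j ν else 0) else 0) := by
        intro j' _
        rcases eq_or_ne j' j with rfl | hne
        · by_cases hij : i < j'
          · simp only [hij, if_true, eq_self_iff_true]
            rw [← Finset.sum_add_distrib]
            exact Finset.sum_congr rfl fun ν _ => by ring
          · simp [hij]
        · simp [hne]
      rw [Finset.sum_congr rfl hterm, Finset.sum_add_distrib,
        Finset.sum_ite_eq' Finset.univ j (fun _ => (if i < j then ∑ ν : Fin (ℓ j), cR i j ν else 0))]
      simp
    rw [hS1, hS2]
    have hpi := hπ i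
    have hδ : (if i = j then (ℓ j : R) else 0) + (if i < j then ∑ ν : Fin (ℓ j), cR i j ν else 0)
        = (if i = j then (ℓ j : R) else if i < j then ∑ ν : Fin (ℓ j), cR i j ν else 0) := by
      by_cases h : i = j
      · subst h
        rw [if_pos rfl, if_pos rfl, if_neg (lt_irrefl i), add_zero]
      · rw [if_neg h, if_neg h, zero_add]
    linarith [hδ ▸ hpi]

theorem statement12 (k : ℕ) (hk : 1 ≤ k) (ℓ : Fin k → ℕ) (hℓ : ∀ j, 2 ≤ ℓ j)
    (c : ∀ i j : Fin k, Fin (ℓ j) → ℤ)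
    (hc : ∀ i j : Fin k, i < j → ∀ ν, c i j ν ≤ 0) :
    ClosedUnderCHull k ℓ c (immZ k ℓ c) ∧ ClosedUnderCHull k ℓ c (immR k ℓ c) := by
  have hℓ1 : ∀ j, 1 ≤ ℓ j := fun j => le_trans one_le_two (hℓ j)
  constructor
  · intro a haI j hj J hmem
    obtain ⟨x, ⟨hx1, hx2⟩, hπx⟩ := hmem
    have hπ : ∀ i, (∑ ν : Fin (ℓ i), x ⟨i, ν⟩) +
        ∑ j' : Fin k, (if i < j' then ∑ ν : Fin (ℓ j'), c i j' ν * x ⟨j', ν⟩ else 0)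
        = a i - (if i = j then (ℓ j : ℤ) else if i < j then ∑ ν : Fin (ℓ j), c i j ν else 0) := by
      intro i
      have := congrFun hπx i
      simpa [splitPiZ, vvec, Pi.sub_apply, sub_eq_iff_eq_add] using this
    obtain ⟨J', x', h1, h2, h3⟩ := key hℓ1 c a j hj J x hx1 hx2 hπ
    exact haI J' ⟨x', ⟨h1, h2⟩, funext fun i => h3 i⟩
  · intro a haI j hj J hmem
    obtain ⟨x, ⟨hx1, hx2⟩, hπx⟩ := hmem
    have hπ : ∀ i, (∑ ν : Fin (ℓ i), x ⟨i, ν⟩) +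
        ∑ j' : Fin k, (if i < j' then ∑ ν : Fin (ℓ j'), (c i j' ν : ℝ) * x ⟨j', ν⟩ else 0)
        = (a i : ℝ) - (if i = j then (ℓ j : ℝ) else if i < j then ∑ ν : Fin (ℓ j), (c i j ν : ℝ) else 0) := by
      intro i
      have h := congrFun hπx i
      have hv : (((a - vvec k ℓ c j) i : ℤ) : ℝ)
          = (a i : ℝ) - (if i = j then (ℓ j : ℝ) else if i < j then ∑ ν : Fin (ℓ j), (c i j ν : ℝ) else 0) := by
        simp only [Pi.sub_apply, vvec]
        split_ifs <;> push_cast <;> ring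
      rw [hv] at h
      simpa [splitPiR] using h
    have haR : ∀ i, j ≤ i → ((a i : ℝ)) = 0 := fun i hi => by
      rw [hj i hi]; norm_num
    obtain ⟨J', x', h1, h2, h3⟩ :=
      key hℓ1 (fun i j ν => (c i j ν : ℝ)) (fun i => (a i : ℝ)) j haR J x hx1 hx2 hπ
    exact haI J' ⟨x', ⟨h1, h2⟩, funext fun i => h3 i⟩
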